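/- Let A and B be invertible 2×2 real matrices of finite order with A·B = B·A, and suppose the order of A is at least 3. Then there exists an invertible 2×2 real matrix P and angles θ, φ ∈ ℝ such that P⁻¹·A·P = R_θ and P⁻¹·B·P = R_φ; that is, A and B are simultaneously conjugate to rotations. -/

import Mathlib

open Matrix

/-- The rotation matrix of the plane by angle `θ`. -/
noncomputable def rotMat (θ : ℝ) : Matrix (Fin 2) (Fin 2) ℝ :=
  !![Real.cos θ, -Real.sin θ; Real.sin θ, Real.cos θ]

lemma real_root_one_nonneg {x : ℝ} {n : ℕ} (hn : 0 < n) (hx : 0 ≤ x) (h : x ^ n = 1) :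
    x = 1 := by
  rcases (pow_eq_one_iff_cases).mp h with h1 | h1 | h1
  · omega
  · exact h1
  · linarith [h1.1]


lemma real_root_one {x : ℝ} {n : ℕ} (hn : 0 < n) (h : x ^ n = 1) : x = 1 ∨ x = -1 := by
  rcases (pow_eq_one_iff_cases).mp h with h1 | h1 | h1
  · omega
  · left; exact h1
  · exact Or.inr h1.1

lemma smul_one_eq (x : ℝ) (h : x • (1 : Matrix (Fin 2) (Fin 2) ℝ) = 1) : x = 1 := by
  have := congrFun (congrFun h 0) 0
  simpa [Matrix.one_apply] using this

lemma cayley2 (A : Matrix (Fin 2) (Fin 2) ℝ) :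
    A * A = (A.trace) • A - (A.det) • 1 := by
  ext i j
  fin_cases i <;> fin_cases j <;>
    simp [Matrix.mul_apply, Fin.sum_univ_two, Matrix.trace_fin_two, Matrix.det_fin_two,
      Matrix.one_apply] <;> ring

lemma scalar_finish (A : Matrix (Fin 2) (Fin 2) ℝ) (c : ℝ) (m : ℕ) (hAsc : A = c • 1)
    (hAn : A ^ (m+1) = 1) : A * A = 1 := by
  rw [hAsc, smul_pow, one_pow] at hAn
  have hc := smul_one_eq _ hAn
  have hc2 : c ^ 2 = 1 := by
    rcases real_root_one (Nat.succ_pos m) hc with h | h <;> rw [h] <;> ring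
  rw [hAsc, smul_mul_assoc, mul_smul_comm, smul_smul, mul_one, ← pow_two, hc2, one_smul]

lemma discr_neg (A : Matrix (Fin 2) (Fin 2) ℝ) (n : ℕ) (hn : 0 < n) (hAn : A ^ n = 1)
    (h2 : A * A ≠ 1) : A.trace ^ 2 < 4 * A.det := by
  by_contra hge
  push_neg at hge
  have hch := cayley2 A
  obtain ⟨t, ht⟩ : ∃ t, A.trace = t := ⟨_, rfl⟩
  obtain ⟨d, hd⟩ : ∃ d, A.det = d := ⟨_, rfl⟩
  rw [ht, hd] at hch hge
  obtain ⟨m, rfl⟩ : ∃ m, n = m + 1 := ⟨n - 1, by omega⟩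
  have hD0 : (0:ℝ) ≤ t ^ 2 - 4 * d := by linarith
  by_cases hD : t ^ 2 - 4 * d = 0
  · -- repeated root case
    obtain ⟨lam, hlam⟩ : ∃ lam : ℝ, t / 2 = lam := ⟨_, rfl⟩
    have hlamt : t = 2 * lam := by rw [← hlam]; ring
    have hlamd : d = lam ^ 2 := by linear_combination (-(1:ℝ)/4) * hD + ((t + 2*lam)/4) * hlamt
    obtain ⟨N, hN⟩ : ∃ N, A - lam • 1 = N := ⟨_, rfl⟩
    have hAval : A = lam • 1 + N := by rw [← hN]; abel
    have hNN : N * N = 0 := by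
      rw [← hN]
      simp only [sub_mul, mul_sub, mul_smul_comm, smul_mul_assoc, mul_one, one_mul, hch, smul_smul]
      match_scalars <;> linarith
    have hpow : ∀ k : ℕ, A ^ (k + 1) = (lam ^ (k+1)) • 1 + (((k:ℝ)+1) * lam ^ k) • N := by
      intro k
      induction k with
      | zero => simp [hAval]
      | succ k ih =>
        rw [pow_succ, ih, hAval]
        simp only [add_mul, mul_add, smul_mul_assoc, mul_smul_comm, one_mul, mul_one,
          hNN, smul_zero, smul_smul, mul_zero]
        match_scalars <;> push_cast <;> ring
    have hAn' := hAn
    rw [hpow m] at hAn'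
    have hNz : (lam ^ (m+1) - 1) • N = 0 := by
      have h3 := congrArg (fun M => M * N) hAn'
      simp only [add_mul, smul_mul_assoc, one_mul, hNN, smul_zero, add_zero] at h3
      rw [sub_smul, one_smul, h3]
      simp
    have hNzero : N = 0 := by
      rcases smul_eq_zero.mp hNz with h | h
      · -- lam^(m+1) = 1
        have hl1 : lam ^ (m+1) = 1 := by linarith [sub_eq_zero.mp h]
        have hlne : lam ≠ 0 := by
          intro h0; rw [h0] at hl1; simp at hl1
        rw [hl1, one_smul] at hAn'
        have h4 : (((m:ℝ)+1) * lam ^ m) • N = 0 := by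
          have := add_eq_left.mp hAn'
          exact this
        rcases smul_eq_zero.mp h4 with h' | h'
        · exfalso
          rcases mul_eq_zero.mp h' with h'' | h''
          · have : ((m:ℝ)+1) ≠ 0 := by positivity
            exact this h''
          · exact hlne (pow_eq_zero_iff'.mp h'').1
        · exact h'
      · exact h
    -- N = 0 ⇒ A = lam • 1
    have hAsc : A = lam • 1 := by rw [hAval, hNzero, add_zero]
    have hlamn : lam ^ (m+1) = 1 := by
      rw [hAsc] at hAn
      rw [smul_pow, one_pow] at hAn
      exact smul_one_eq _ hAn
    have hlam2 : lam ^ 2 = 1 := by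
      rcases real_root_one (by omega) hlamn with h | h <;> rw [h] <;> ring
    apply h2
    rw [hAsc, smul_mul_assoc, mul_smul_comm, smul_smul, mul_one, ← pow_two, hlam2, one_smul]
  · -- distinct real roots
    have hDgt : (0:ℝ) < t ^ 2 - 4 * d := lt_of_le_of_ne hD0 (Ne.symm hD)
    obtain ⟨D, hDdef⟩ : ∃ D : ℝ, Real.sqrt (t ^ 2 - 4 * d) = D := ⟨_, rfl⟩
    have hDpos : 0 < D := hDdef ▸ Real.sqrt_pos.mpr hDgt
    have hDne : D ≠ 0 := ne_of_gt hDpos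
    have hD2 : D ^ 2 = t ^ 2 - 4 * d := by rw [← hDdef]; exact Real.sq_sqrt hD0
    obtain ⟨lam, hlam⟩ : ∃ lam : ℝ, (t + D) / 2 = lam := ⟨_, rfl⟩
    obtain ⟨mu, hmu⟩ : ∃ mu : ℝ, (t - D) / 2 = mu := ⟨_, rfl⟩
    have hsum : lam + mu = t := by rw [← hlam, ← hmu]; ring
    have hdiff : lam - mu = D := by rw [← hlam, ← hmu]; ring
    have hprod : lam * mu = d := by
      rw [← hlam, ← hmu]; linear_combination (-(1:ℝ)/4) * hD2
    obtain ⟨E, hE⟩ : ∃ E, A - mu • 1 = E := ⟨_, rfl⟩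
    obtain ⟨F, hF⟩ : ∃ F, lam • 1 - A = F := ⟨_, rfl⟩
    have hEF : E + F = D • 1 := by
      rw [← hE, ← hF]
      match_scalars <;> linarith
    have hAE : A * E = lam • E := by
      rw [← hE]
      simp only [mul_sub, mul_smul_comm, mul_one, hch]
      match_scalars
      · linarith
      · linear_combination hprod
    have hAF : A * F = mu • F := by
      rw [← hF]
      simp only [mul_sub, mul_smul_comm, mul_one, hch]
      match_scalars
      · linarith
      · linear_combination -hprod
    have hEE : E * E = D • E := by
      rw [← hE]
      simp only [sub_mul, mul_sub, smul_mul_assoc, mul_smul_comm, one_mul, mul_one,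
        smul_smul, hch]
      match_scalars
      · linarith
      · linear_combination hprod - mu * hdiff
    have hFF : F * F = D • F := by
      rw [← hF]
      simp only [sub_mul, mul_sub, smul_mul_assoc, mul_smul_comm, one_mul, mul_one,
        smul_smul, hch]
      match_scalars
      · linear_combination lam * hdiff + hprod
      · linarith
    have hEF0 : E * F = 0 := by
      rw [← hE, ← hF]
      simp only [sub_mul, mul_sub, smul_mul_assoc, mul_smul_comm, one_mul, mul_one,
        smul_smul, hch]
      match_scalars
      · linarith
      · linear_combination -hprod
    have hFE : F * E = 0 := by
      rw [← hE, ← hF]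
      simp only [sub_mul, mul_sub, smul_mul_assoc, mul_smul_comm, one_mul, mul_one,
        smul_smul, hch]
      match_scalars
      · linarith
      · linear_combination -hprod
    have hpow : ∀ k : ℕ, D • A ^ k = lam ^ k • E + mu ^ k • F := by
      intro k
      induction k with
      | zero => simp only [pow_zero, one_smul]; exact hEF.symm
      | succ k ih =>
        have h5 : D • A ^ (k + 1) = A * (D • A ^ k) := by
          rw [mul_smul_comm, ← pow_succ']
        rw [h5, ih, mul_add, mul_smul_comm, mul_smul_comm, hAE, hAF, smul_smul, smul_smul,
          ← pow_succ, ← pow_succ]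
    have h1 := hpow (m + 1)
    rw [hAn] at h1
    by_cases hE0 : E = 0
    · have hAsc : A = mu • 1 := by
        have := hE; rw [hE0, sub_eq_zero] at this; exact this
      exact h2 (scalar_finish A mu m hAsc hAn)
    by_cases hF0 : F = 0
    · have hAsc : A = lam • 1 := by
        have := hF; rw [hF0, sub_eq_zero] at this; exact this.symm
      exact h2 (scalar_finish A lam m hAsc hAn)
    · have hlam1 : lam ^ (m + 1) = 1 := by
        have h3 := congrArg (· * E) h1
        simp only [add_mul, smul_mul_assoc, one_mul, hEE, hFE, smul_zero, add_zero,
          smul_smul] at h3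
        have h4 : (D - lam ^ (m + 1) * D) • E = 0 := by rw [sub_smul, h3, sub_self]
        rcases smul_eq_zero.mp h4 with h | h
        · have h7 : lam ^ (m + 1) * D = 1 * D := by linarith
          exact mul_right_cancel₀ hDne h7
        · exact absurd h hE0
      have hmu1 : mu ^ (m + 1) = 1 := by
        have h3 := congrArg (· * F) h1
        simp only [add_mul, smul_mul_assoc, one_mul, hFF, hEF0, smul_zero, zero_add,
          smul_smul] at h3
        have h4 : (D - mu ^ (m + 1) * D) • F = 0 := by rw [sub_smul, h3, sub_self]
        rcases smul_eq_zero.mp h4 with h | h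
        · have h7 : mu ^ (m + 1) * D = 1 * D := by linarith
          exact mul_right_cancel₀ hDne h7
        · exact absurd h hF0
      have hlam2 : lam ^ 2 = 1 := by
        rcases real_root_one (Nat.succ_pos m) hlam1 with h | h <;> rw [h] <;> ring
      have hmu2 : mu ^ 2 = 1 := by
        rcases real_root_one (Nat.succ_pos m) hmu1 with h | h <;> rw [h] <;> ring
      apply h2
      have h8 := hpow 2
      rw [hlam2, hmu2, one_smul, one_smul, hEF] at h8
      have h9 : A ^ 2 = 1 := smul_right_injective _ hDne h8
      rw [← pow_two]
      exact h9

theorem stmt_4 (A B : Matrix (Fin 2) (Fin 2) ℝ) (hA : IsUnit A) (hB : IsUnit B)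
    (hAfin : ∃ n : ℕ, 0 < n ∧ A ^ n = 1) (hBfin : ∃ n : ℕ, 0 < n ∧ B ^ n = 1)
    (hcomm : A * B = B * A)
    (hAord : ∀ j : ℕ, 0 < j → j < 3 → A ^ j ≠ 1) :
    ∃ (P : Matrix (Fin 2) (Fin 2) ℝ) (θ φ : ℝ), IsUnit P ∧
      P⁻¹ * A * P = rotMat θ ∧ P⁻¹ * B * P = rotMat φ := by
  obtain ⟨n, hn, hAn⟩ := hAfin
  have hAA : A * A ≠ 1 := by
    intro h
    exact hAord 2 (by norm_num) (by norm_num) (by rw [pow_two]; exact h)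
  have hdisc := discr_neg A n hn hAn hAA
  have hdetn : A.det ^ n = 1 := by rw [← Matrix.det_pow, hAn, Matrix.det_one]
  have hdet1 : A.det = 1 := by
    rcases real_root_one hn hdetn with h | h
    · exact h
    · rw [h] at hdisc
      nlinarith [sq_nonneg A.trace]

  obtain ⟨m, hm, hBm⟩ := hBfin
  have htr : A 0 0 + A 1 1 = A.trace := (Matrix.trace_fin_two A).symm
  have hdet : A 0 0 * A 1 1 - A 0 1 * A 1 0 = 1 := by
    rw [← Matrix.det_fin_two A, hdet1]
  rw [hdet1] at hdisc
  -- c, s, θ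
  obtain ⟨c, hc⟩ : ∃ c : ℝ, A.trace / 2 = c := ⟨_, rfl⟩
  have hc2 : c ^ 2 < 1 := by rw [← hc]; nlinarith
  obtain ⟨s, hs⟩ : ∃ s : ℝ, Real.sqrt (1 - c ^ 2) = s := ⟨_, rfl⟩
  have hspos : 0 < s := hs ▸ Real.sqrt_pos.mpr (by linarith)
  have hsne : s ≠ 0 := ne_of_gt hspos
  have hs2 : s ^ 2 = 1 - c ^ 2 := by rw [← hs]; exact Real.sq_sqrt (by linarith)
  have hcosθ : Real.cos (Real.arccos c) = c :=
    Real.cos_arccos (by nlinarith) (by nlinarith)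
  have hsinθ : Real.sin (Real.arccos c) = s := by rw [Real.sin_arccos, hs]
  have htrc : A 0 0 + A 1 1 = 2 * c := by rw [htr, ← hc]; ring
  -- A 1 0 ≠ 0
  have hA10 : A 1 0 ≠ 0 := by
    intro h0
    rw [h0] at hdet
    have hsq : (A 0 0 + A 1 1) ^ 2 = 4 * c ^ 2 := by rw [htrc]; ring
    nlinarith [sq_nonneg (A 0 0 - A 1 1), hsq, hdet, hc2]
  -- P
  obtain ⟨P, hP⟩ : ∃ P : Matrix (Fin 2) (Fin 2) ℝ,
      !![1, (A 0 0 - c)/s; 0, A 1 0 / s] = P := ⟨_, rfl⟩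
  have hdetP : P.det = A 1 0 / s := by rw [← hP]; simp [Matrix.det_fin_two]
  have hdetPne : P.det ≠ 0 := by rw [hdetP]; exact div_ne_zero hA10 hsne
  have hPu : IsUnit P := (Matrix.isUnit_iff_isUnit_det P).mpr (isUnit_iff_ne_zero.mpr hdetPne)
  have hPinv : P⁻¹ * P = 1 := Matrix.nonsing_inv_mul P (isUnit_iff_ne_zero.mpr hdetPne)
  have hPPinv : P * P⁻¹ = 1 := Matrix.mul_nonsing_inv P (isUnit_iff_ne_zero.mpr hdetPne)
  -- A * P = P * R
  have hAP : A * P = P * rotMat (Real.arccos c) := by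
    rw [← hP, rotMat, hcosθ, hsinθ]
    ext i j
    fin_cases i <;> fin_cases j
    · simp [Matrix.mul_apply, Fin.sum_univ_two]
      field_simp
      ring
    · simp [Matrix.mul_apply, Fin.sum_univ_two]
      field_simp
      linear_combination A 0 0 * htrc - hdet + hs2
    · simp [Matrix.mul_apply, Fin.sum_univ_two]
      field_simp
    · simp [Matrix.mul_apply, Fin.sum_univ_two]
      field_simp
      linear_combination htrc
  have hA' : P⁻¹ * A * P = rotMat (Real.arccos c) := by
    rw [Matrix.mul_assoc, hAP, ← Matrix.mul_assoc, hPinv, one_mul]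
  -- B part
  obtain ⟨B', hB'⟩ : ∃ B', P⁻¹ * B * P = B' := ⟨_, rfl⟩
  have hconj : ∀ X Y : Matrix (Fin 2) (Fin 2) ℝ,
      (P⁻¹ * X * P) * (P⁻¹ * Y * P) = P⁻¹ * (X * Y) * P := by
    intro X Y
    simp only [Matrix.mul_assoc]
    rw [← Matrix.mul_assoc P P⁻¹ (Y * P), hPPinv, one_mul]
  have hBR : B' * rotMat (Real.arccos c) = rotMat (Real.arccos c) * B' := by
    rw [← hB', ← hA', hconj, hconj, hcomm]
  -- extract entry relations
  have h00 := congrFun (congrFun hBR 0) 0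
  have h01 := congrFun (congrFun hBR 0) 1
  simp [rotMat, hcosθ, hsinθ, Matrix.mul_apply, Fin.sum_univ_two] at h00 h01
  have e1 : B' 0 1 = -(B' 1 0) := by
    have h : s * (B' 0 1 + B' 1 0) = 0 := by linarith [h00]
    rcases mul_eq_zero.mp h with h | h
    · exact absurd h hsne
    · linarith
  have e2 : B' 1 1 = B' 0 0 := by
    have h : s * (B' 1 1 - B' 0 0) = 0 := by linarith [h01]
    rcases mul_eq_zero.mp h with h | h
    · exact absurd h hsne
    · linarith
  -- det B' = 1
  have hdetB' : B'.det = B.det := by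
    rw [← hB', Matrix.det_mul, Matrix.det_mul, Matrix.det_nonsing_inv]
    rw [Ring.inverse_eq_inv']
    field_simp
  have hdetBm : B.det ^ m = 1 := by rw [← Matrix.det_pow, hBm, Matrix.det_one]
  have hdetB'1 : B' 0 0 ^ 2 + B' 1 0 ^ 2 = 1 := by
    have h := hdetB'
    rw [Matrix.det_fin_two, e1, e2] at h
    have h2 : (B' 0 0 ^ 2 + B' 1 0 ^ 2) ^ m = 1 := by
      rw [show B' 0 0 ^ 2 + B' 1 0 ^ 2 = B.det by linear_combination h]
      exact hdetBm
    exact real_root_one_nonneg hm (by positivity) h2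
  -- find φ
  obtain ⟨z, hz⟩ : ∃ z : ℂ, Complex.mk (B' 0 0) (B' 1 0) = z := ⟨_, rfl⟩
  have hzabs : ‖z‖ = 1 := by
    have h1 : ‖z‖ ^ 2 = 1 := by
      rw [Complex.sq_norm, ← hz, Complex.normSq_mk]
      linear_combination hdetB'1
    exact real_root_one_nonneg two_pos (norm_nonneg z) h1
  have hzne : z ≠ 0 := by
    intro h
    rw [h] at hzabs
    simp at hzabs
  have hre : z.re = B' 0 0 := by rw [← hz]
  have him : z.im = B' 1 0 := by rw [← hz]
  have hcosφ : Real.cos z.arg = B' 0 0 := by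
    rw [Complex.cos_arg hzne, hzabs, hre, div_one]
  have hsinφ : Real.sin z.arg = B' 1 0 := by
    rw [Complex.sin_arg, hzabs, him, div_one]
  refine ⟨P, Real.arccos c, z.arg, hPu, hA', ?_⟩
  rw [hB', rotMat, hcosφ, hsinφ]
  ext i j
  fin_cases i <;> fin_cases j
  · simp
  · simp [e1]
  · simp
  · simp [e2]
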